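/- The upper bound ub(f,X,μ)_r equals the smallest eigenvalue of the matrix M = (∫_X f P_α P_β dμ)_{α,β}, where {P_α} is an orthonormal basis of the polynomials of degree at most r with respect to the inner product ⟨p,q⟩ = ∫_X pq dμ. -/

import Mathlib

open MvPolynomial MeasureTheory

/-- The set `ℕⁿ_r` of exponent vectors of total degree at most `r`. -/
abbrev DegLe (n r : ℕ) : Type := {α : Fin n →₀ ℕ // (∑ i, α i) ≤ r}

noncomputable instance (n r : ℕ) : Fintype (DegLe n r) :=
  Fintype.ofInjective
    (fun a => fun i => (⟨a.1 i, Nat.lt_succ_of_le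
      ((Finset.single_le_sum (fun i _ => Nat.zero_le (a.1 i)) (Finset.mem_univ i)).trans
        a.2)⟩ : Fin (r + 1)))
    (fun a b h => Subtype.ext (Finsupp.ext fun i => congrArg Fin.val (congrFun h i)))

noncomputable instance (n r : ℕ) : DecidableEq (DegLe n r) := Classical.decEq _

section Aux
variable {n : ℕ}

/-- sum of squares on a list of reals -/
lemma list_sq_zero (l : List ℝ) (h : (l.map fun a => a * a).sum = 0) : ∀ a ∈ l, a = 0 := by
  induction l with
  | nil => simp
  | cons a t ih =>
    simp only [List.map_cons, List.sum_cons] at h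
    have hta : (0:ℝ) ≤ a * a := mul_self_nonneg a
    have htt : (0:ℝ) ≤ (t.map fun a => a * a).sum := by
      apply List.sum_nonneg
      intro x hx
      obtain ⟨b, _, rfl⟩ := List.mem_map.mp hx
      exact mul_self_nonneg b
    obtain ⟨h1, h2⟩ := (add_eq_zero_iff_of_nonneg hta htt).mp h
    intro b hb
    rcases List.mem_cons.mp hb with rfl | hb
    · exact mul_self_eq_zero.mp h1
    · exact ih h2 b hb

lemma sumSq_list_zero {L : List (MvPolynomial (Fin n) ℝ)}
    (h : (L.map fun p => p * p).sum = 0) : ∀ p ∈ L, p = 0 := by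
  intro p hp
  apply MvPolynomial.funext
  intro x
  have hx : ((L.map fun p => eval x p).map fun a => a * a).sum = 0 := by
    have := congrArg (eval x) h
    rw [map_list_sum] at this
    rw [List.map_map]
    rw [List.map_map] at this
    convert this using 2
    · rfl
    · rfl
    · simp [Function.comp_def]
    · simp
  have := list_sq_zero _ hx (eval x p) (List.mem_map.mpr ⟨p, hp, rfl⟩)
  simpa using this

lemma homog_sq (p : MvPolynomial (Fin n) ℝ) (d : ℕ) (hp : p.totalDegree ≤ d) :
    homogeneousComponent (2 * d) (p * p) =
      homogeneousComponent d p * homogeneousComponent d p := by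
  set h := homogeneousComponent d p with hh
  set q := p - h with hqdef
  have hph : p = h + q := by ring
  have hcoeff : ∀ m : Fin n →₀ ℕ, coeff m q ≠ 0 → m.degree < d := by
    intro m hm
    rcases lt_trichotomy m.degree d with hlt | heq | hgt
    · exact hlt
    · exfalso
      apply hm
      rw [hqdef, coeff_sub, hh, coeff_homogeneousComponent, if_pos heq, sub_self]
    · exfalso
      apply hm
      have hz : coeff m p = 0 := by
        apply coeff_eq_zero_of_totalDegree_lt
        exact lt_of_le_of_lt hp hgt
      rw [hqdef, coeff_sub, hh, coeff_homogeneousComponent, if_neg (by omega), hz, sub_zero]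
  have hq : q = 0 ∨ q.totalDegree < d := by
    by_cases h0 : q = 0
    · exact Or.inl h0
    · right
      obtain ⟨m, hm⟩ := (MvPolynomial.ne_zero_iff).mp h0
      have hd0 : 0 < d := lt_of_le_of_lt (Nat.zero_le _) (hcoeff m hm)
      rw [totalDegree, Finset.sup_lt_iff hd0]
      intro b hb
      exact hcoeff b (mem_support_iff.mp hb)
  have hhh : (h * h).IsHomogeneous (2 * d) := by
    have := homogeneousComponent_isHomogeneous d p
    rw [two_mul]
    exact this.mul this
  have hmain : p * p = h * h + (h * q + q * h + q * q) := by rw [hph]; ring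
  rw [hmain, map_add, homogeneousComponent_of_mem hhh, if_pos rfl]
  rcases hq with h0 | hqd
  · rw [h0]; simp
  · have hrest : (h * q + q * h + q * q).totalDegree < 2 * d := by
      have hhd : h.totalDegree ≤ d := (homogeneousComponent_isHomogeneous d p).totalDegree_le
      have h1 : (h * q).totalDegree < 2 * d :=
        lt_of_le_of_lt (totalDegree_mul h q) (by omega)
      have h2 : (q * h).totalDegree < 2 * d :=
        lt_of_le_of_lt (totalDegree_mul q h) (by omega)
      have h3 : (q * q).totalDegree < 2 * d :=
        lt_of_le_of_lt (totalDegree_mul q q) (by omega)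
      calc (h * q + q * h + q * q).totalDegree
          ≤ max (h * q + q * h).totalDegree (q * q).totalDegree := totalDegree_add _ _
        _ ≤ max (max (h*q).totalDegree (q*h).totalDegree) (q*q).totalDegree := by
            exact max_le_max (totalDegree_add _ _) le_rfl
        _ < 2 * d := by omega
    rw [homogeneousComponent_eq_zero _ _ hrest, add_zero]

lemma homog_sumSq (L : List (MvPolynomial (Fin n) ℝ)) (d : ℕ)
    (h : ∀ p ∈ L, p.totalDegree ≤ d) :
    homogeneousComponent (2 * d) ((L.map fun p => p * p).sum)
      = (((L.map fun p => homogeneousComponent d p)).map (fun q => q * q)).sum := by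
  induction L with
  | nil => simp
  | cons a t ih =>
    simp only [List.map_cons, List.sum_cons, map_add]
    rw [homog_sq a d (h a (List.mem_cons_self)), ih (fun p hp => h p (List.mem_cons_of_mem a hp))]

lemma exists_mem_list_max (L : List ℕ) (hL : L ≠ []) : ∃ a ∈ L, ∀ b ∈ L, b ≤ a := by
  induction L with
  | nil => simp at hL
  | cons a t ih =>
    rcases eq_or_ne t [] with rfl | ht
    · exact ⟨a, by simp⟩
    · obtain ⟨m, hm, hmax⟩ := ih ht
      rcases le_total a m with hle | hle
      · exact ⟨m, List.mem_cons_of_mem a hm, by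
          intro b hb
          rcases List.mem_cons.mp hb with rfl | hb
          · exact hle
          · exact hmax b hb⟩
      · exact ⟨a, List.mem_cons_self, by
          intro b hb
          rcases List.mem_cons.mp hb with rfl | hb
          · exact le_rfl
          · exact (hmax b hb).trans hle⟩

lemma sumSq_deg (L : List (MvPolynomial (Fin n) ℝ)) :
    ∀ p ∈ L, 2 * p.totalDegree ≤ ((L.map fun p => p * p).sum).totalDegree := by
  intro p hp
  by_contra hcon
  push_neg at hcon
  -- let d be the max of totalDegrees in L
  obtain ⟨d, hdmem, hdmax⟩ := exists_mem_list_max (L.map totalDegree)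
    (by simp; rintro rfl; simp at hp)
  obtain ⟨p₁, hp₁L, hp₁d⟩ := List.mem_map.mp hdmem
  have hdle : ∀ q ∈ L, q.totalDegree ≤ d := fun q hq =>
    hdmax _ (List.mem_map.mpr ⟨q, hq, rfl⟩)
  have hpd : p.totalDegree ≤ d := hdle p hp
  have hlt : ((L.map fun p => p * p).sum).totalDegree < 2 * d :=
    lt_of_lt_of_le hcon (by omega)
  have hz := homogeneousComponent_eq_zero _ _ hlt
  rw [homog_sumSq L d hdle] at hz
  have hall := sumSq_list_zero hz
  -- p₁ has totalDegree d and nonzero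
  have hd0 : 0 < d := by
    have : 0 < p.totalDegree := by omega
    omega
  have hp₁ne : p₁ ≠ 0 := by
    intro h0
    rw [h0] at hp₁d
    simp [totalDegree_zero] at hp₁d
    omega
  have hzero : homogeneousComponent d p₁ = 0 :=
    hall _ (List.mem_map.mpr ⟨p₁, hp₁L, rfl⟩)
  -- but top coefficient survives
  have hsupne : p₁.support.Nonempty := by
    rw [Finset.nonempty_iff_ne_empty]
    simpa [Ne, MvPolynomial.support_eq_empty] using hp₁ne
  obtain ⟨m₀, hm₀s, hm₀⟩ := Finset.exists_mem_eq_sup p₁.support hsupne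
    (fun m => m.sum fun _ e => e)
  have hms : (m₀ : Fin n →₀ ℕ).degree = d := by
    rw [← hp₁d, totalDegree, hm₀]
    rfl
  have : coeff m₀ (homogeneousComponent d p₁) = coeff m₀ p₁ := by
    rw [coeff_homogeneousComponent, if_pos hms]
  rw [hzero] at this
  exact (mem_support_iff.mp hm₀s) this.symm

lemma isSumSq_list {σ : MvPolynomial (Fin n) ℝ} (h : IsSumSq σ) :
    ∃ L : List (MvPolynomial (Fin n) ℝ), σ = (L.map fun p => p * p).sum := by
  induction h with
  | zero => exact ⟨[], by simp⟩
  | sq_add a _ ih =>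
      obtain ⟨L, hL⟩ := ih
      exact ⟨a :: L, by simp [hL]⟩

open Matrix in
lemma rayleigh_bound {ι : Type*} [Fintype ι] [DecidableEq ι] [Nonempty ι]
    (M : Matrix ι ι ℝ) (hM : M.IsHermitian) (c : ι → ℝ) :
    (⨅ i, hM.eigenvalues i) * (∑ α, c α * c α) ≤ c ⬝ᵥ (M *ᵥ c) := by
  set U : Matrix ι ι ℝ := (hM.eigenvectorUnitary : Matrix ι ι ℝ) with hU
  set g : ι → ℝ := star U *ᵥ c with hg
  have hUU : U * star U = 1 := (Matrix.mem_unitaryGroup_iff).mp hM.eigenvectorUnitary.2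
  have hUg : U *ᵥ g = c := by
    rw [hg, Matrix.mulVec_mulVec, hUU, Matrix.one_mulVec]
  have hstar : star U = Uᵀ := by
    rw [Matrix.star_eq_conjTranspose, Matrix.conjTranspose_eq_transpose_of_trivial]
  have hdot : ∀ y : ι → ℝ, c ⬝ᵥ (U *ᵥ y) = g ⬝ᵥ y := by
    intro y
    rw [dotProduct_mulVec]
    congr 1
    rw [hg, hstar, Matrix.mulVec_transpose]
  have hMc : M *ᵥ c = U *ᵥ (Matrix.diagonal hM.eigenvalues *ᵥ g) := by
    conv_lhs => rw [hM.spectral_theorem, Unitary.conjStarAlgAut_apply]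
    rw [← Matrix.mulVec_mulVec, ← Matrix.mulVec_mulVec, ← hg]
    congr 2
  have hgg : g ⬝ᵥ g = ∑ α, c α * c α := by
    have h1 : c ⬝ᵥ (U *ᵥ g) = g ⬝ᵥ g := hdot g
    rw [hUg] at h1
    rw [← h1, dotProduct]
  have hmin : ∀ i, (⨅ j, hM.eigenvalues j) ≤ hM.eigenvalues i := fun i =>
    ciInf_le (Finite.bddBelow_range _) i
  calc (⨅ i, hM.eigenvalues i) * (∑ α, c α * c α)
      = ∑ i, (⨅ j, hM.eigenvalues j) * (g i * g i) := by
        rw [← hgg, dotProduct, Finset.mul_sum]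
    _ ≤ ∑ i, hM.eigenvalues i * (g i * g i) := by
        apply Finset.sum_le_sum
        intro i _
        exact mul_le_mul_of_nonneg_right (hmin i) (mul_self_nonneg _)
    _ = g ⬝ᵥ (Matrix.diagonal hM.eigenvalues *ᵥ g) := by
        rw [dotProduct]
        congr 1
        ext i
        rw [Matrix.mulVec_diagonal]
        ring
    _ = c ⬝ᵥ (M *ᵥ c) := by rw [hMc, hdot]

open Matrix in
lemma exists_min_eigvec {ι : Type*} [Fintype ι] [DecidableEq ι] [Nonempty ι]
    (M : Matrix ι ι ℝ) (hM : M.IsHermitian) :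
    ∃ c : ι → ℝ, (∑ α, c α * c α) = 1 ∧ c ⬝ᵥ (M *ᵥ c) = ⨅ i, hM.eigenvalues i := by
  obtain ⟨i₀, hi₀⟩ := exists_eq_ciInf_of_finite (f := hM.eigenvalues)
  set c : ι → ℝ := ⇑(hM.eigenvectorBasis i₀) with hc
  have hnorm := hM.eigenvectorBasis.orthonormal.1 i₀
  have hsum : (∑ α, c α * c α) = 1 := by
    have h1 : (inner (𝕜 := ℝ) (hM.eigenvectorBasis i₀) (hM.eigenvectorBasis i₀) : ℝ)
        = ∑ α, c α * c α := by
      simp only [PiLp.inner_apply, RCLike.inner_apply, hc, conj_trivial]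
    rw [← h1, real_inner_self_eq_norm_mul_norm, hnorm]
    norm_num
  refine ⟨c, hsum, ?_⟩
  rw [hc, hM.mulVec_eigenvectorBasis, dotProduct_smul]
  rw [← hc]
  have : c ⬝ᵥ c = ∑ α, c α * c α := rfl
  rw [smul_eq_mul, this, hsum, mul_one, hi₀]

end Aux

/-- The Lasserre upper bound `ub(f,X,μ)_r` equals the smallest eigenvalue of the matrix
`M = (∫_X f P_α P_β dμ)_{α,β}`, where `{P_α : |α| ≤ r}` is an orthonormal basis of the
polynomials of degree at most `r` w.r.t. the inner product `⟨p,q⟩ = ∫_X p q dμ`. -/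
theorem lasserreUB_eq_min_eigenvalue (n r : ℕ) (X : Set (Fin n → ℝ))
    (hX : IsCompact X) (hXint : (interior X).Nonempty)
    (μ : Measure (Fin n → ℝ)) [IsFiniteMeasure μ] (hsupp : μ Xᶜ = 0) (hpos : 0 < μ X)
    (f : MvPolynomial (Fin n) ℝ)
    (P : DegLe n r → MvPolynomial (Fin n) ℝ)
    (hPdeg : ∀ α, (P α).totalDegree ≤ r)
    (horth : ∀ α β, (∫ x in X, eval x (P α) * eval x (P β) ∂μ) =
      if α = β then 1 else 0)
    (hspan : ∀ p : MvPolynomial (Fin n) ℝ, p.totalDegree ≤ r →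
      p ∈ Submodule.span ℝ (Set.range P))
    (M : Matrix (DegLe n r) (DegLe n r) ℝ)
    (hMdef : M = Matrix.of fun α β => ∫ x in X, eval x f * (eval x (P α) * eval x (P β)) ∂μ)
    (hM : M.IsHermitian) :
    sInf {v : ℝ | ∃ σ : MvPolynomial (Fin n) ℝ, IsSumSq σ ∧ σ.totalDegree ≤ 2 * r ∧
        (∫ x in X, eval x σ ∂μ) = 1 ∧ v = ∫ x in X, eval x f * eval x σ ∂μ} =
      ⨅ i, hM.eigenvalues i := by
  classical
  have hne : Nonempty (DegLe n r) := ⟨⟨0, by simp⟩⟩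
  set lam : ℝ := ⨅ i, hM.eigenvalues i with hlam
  have key_int : ∀ g : MvPolynomial (Fin n) ℝ, IntegrableOn (fun x => eval x g) X μ :=
    fun g => (MvPolynomial.continuous_eval g).continuousOn.integrableOn_compact hX
  have key_int2 : ∀ g₁ g₂ : MvPolynomial (Fin n) ℝ,
      IntegrableOn (fun x => eval x g₁ * eval x g₂) X μ := by
    intro g₁ g₂
    simpa using key_int (g₁ * g₂)
  have key_int3 : ∀ g₁ g₂ g₃ : MvPolynomial (Fin n) ℝ,
      IntegrableOn (fun x => eval x g₁ * (eval x g₂ * eval x g₃)) X μ := by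
    intro g₁ g₂ g₃
    simpa [mul_assoc] using key_int (g₁ * (g₂ * g₃))
  -- degree of the combination
  have hdegcomb : ∀ c : DegLe n r → ℝ, (∑ α, c α • P α).totalDegree ≤ r := by
    intro c
    refine (totalDegree_finset_sum _ _).trans (Finset.sup_le fun α _ => ?_)
    exact (totalDegree_smul_le _ _).trans (hPdeg α)
  -- the two integral computations for a square of a combination
  have hsq : ∀ c : DegLe n r → ℝ,
      (∫ x in X, eval x (∑ α, c α • P α) * eval x (∑ α, c α • P α) ∂μ) = (∑ α, c α * c α) ∧
      (∫ x in X, eval x f *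
          (eval x (∑ α, c α • P α) * eval x (∑ α, c α • P α)) ∂μ)
        = dotProduct c (M.mulVec c) := by
    intro c
    have hev : ∀ x, eval x (∑ α, c α • P α) = ∑ α, c α * eval x (P α) := by
      intro x
      rw [map_sum]
      exact Finset.sum_congr rfl fun α _ => by rw [smul_eq_C_mul, map_mul, eval_C]
    constructor
    · have heq : (fun x => eval x (∑ α, c α • P α) * eval x (∑ α, c α • P α))
          = fun x => ∑ α, ∑ β, (c α * c β) * (eval x (P α) * eval x (P β)) := by
        funext x
        rw [hev, Finset.sum_mul_sum]
        exact Finset.sum_congr rfl fun α _ => Finset.sum_congr rfl fun β _ => by ring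
      calc (∫ x in X, eval x (∑ α, c α • P α) * eval x (∑ α, c α • P α) ∂μ)
          = ∫ x in X, ∑ α, ∑ β, (c α * c β) * (eval x (P α) * eval x (P β)) ∂μ := by
            rw [heq]
        _ = ∑ α, ∑ β, (c α * c β) * ∫ x in X, eval x (P α) * eval x (P β) ∂μ := by
            rw [integral_finset_sum _ (fun α _ => integrable_finset_sum _
              (fun β _ => (key_int2 (P α) (P β)).const_mul _))]
            refine Finset.sum_congr rfl fun α _ => ?_
            rw [integral_finset_sum _ (fun β _ => (key_int2 (P α) (P β)).const_mul _)]
            exact Finset.sum_congr rfl fun β _ => integral_const_mul _ _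
        _ = ∑ α, c α * c α := by
            simp [horth, mul_ite]
    · have heq : (fun x => eval x f *
            (eval x (∑ α, c α • P α) * eval x (∑ α, c α • P α)))
          = fun x => ∑ α, ∑ β,
              (c α * c β) * (eval x f * (eval x (P α) * eval x (P β))) := by
        funext x
        rw [hev, Finset.sum_mul_sum, Finset.mul_sum]
        refine Finset.sum_congr rfl fun α _ => ?_
        rw [Finset.mul_sum]
        exact Finset.sum_congr rfl fun β _ => by ring
      calc (∫ x in X, eval x f *
              (eval x (∑ α, c α • P α) * eval x (∑ α, c α • P α)) ∂μ)
          = ∫ x in X, ∑ α, ∑ β,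
              (c α * c β) * (eval x f * (eval x (P α) * eval x (P β))) ∂μ := by
            rw [heq]
        _ = ∑ α, ∑ β, (c α * c β) *
              ∫ x in X, eval x f * (eval x (P α) * eval x (P β)) ∂μ := by
            rw [integral_finset_sum _ (fun α _ => integrable_finset_sum _
              (fun β _ => (key_int3 f (P α) (P β)).const_mul _))]
            refine Finset.sum_congr rfl fun α _ => ?_
            rw [integral_finset_sum _ (fun β _ => (key_int3 f (P α) (P β)).const_mul _)]
            exact Finset.sum_congr rfl fun β _ => integral_const_mul _ _
        _ = dotProduct c (M.mulVec c) := by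
            rw [hMdef]
            simp only [dotProduct, Matrix.mulVec, Matrix.of_apply, Finset.mul_sum]
            refine Finset.sum_congr rfl fun α _ => Finset.sum_congr rfl fun β _ => by ring
  -- lower bound for sums of squares of combinations of degree ≤ r
  have hLB : ∀ L : List (MvPolynomial (Fin n) ℝ), (∀ p ∈ L, p.totalDegree ≤ r) →
      lam * (∫ x in X, eval x ((L.map fun p => p * p).sum) ∂μ)
        ≤ ∫ x in X, eval x f * eval x ((L.map fun p => p * p).sum) ∂μ := by
    intro L
    induction L with
    | nil => intro _; simp
    | cons a t ih =>
      intro hdeg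
      have ha : a.totalDegree ≤ r := hdeg a (List.mem_cons_self)
      have ht : ∀ p ∈ t, p.totalDegree ≤ r := fun p hp => hdeg p (List.mem_cons_of_mem a hp)
      obtain ⟨c, hc⟩ := (Submodule.mem_span_range_iff_exists_fun ℝ).mp (hspan a ha)
      set S := (t.map fun p => p * p).sum with hS
      have hsplit : (((a :: t).map fun p => p * p).sum) = a * a + S := by simp [hS]
      have e1 : (fun x => eval x (a * a + S)) = fun x => eval x a * eval x a + eval x S := by
        funext x; rw [map_add, map_mul]
      have e2 : (fun x => eval x f * eval x (a * a + S))
          = fun x => eval x f * (eval x a * eval x a) + eval x f * eval x S := by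
        funext x; rw [map_add, map_mul]; ring
      have hIaa : IntegrableOn (fun x => eval x a * eval x a) X μ := key_int2 a a
      have hIS : IntegrableOn (fun x => eval x S) X μ := key_int S
      have hIfaa : IntegrableOn (fun x => eval x f * (eval x a * eval x a)) X μ :=
        key_int3 f a a
      have hIfS : IntegrableOn (fun x => eval x f * eval x S) X μ := key_int2 f S
      rw [hsplit]
      rw [show (∫ x in X, eval x (a * a + S) ∂μ)
          = (∫ x in X, eval x a * eval x a ∂μ) + ∫ x in X, eval x S ∂μ by
        rw [← integral_add hIaa hIS]; rw [e1]]
      rw [show (∫ x in X, eval x f * eval x (a * a + S) ∂μ)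
          = (∫ x in X, eval x f * (eval x a * eval x a) ∂μ)
            + ∫ x in X, eval x f * eval x S ∂μ by
        rw [← integral_add hIfaa hIfS]; rw [e2]]
      rw [mul_add]
      have hb1 : lam * (∫ x in X, eval x a * eval x a ∂μ)
          ≤ ∫ x in X, eval x f * (eval x a * eval x a) ∂μ := by
        obtain ⟨h1, h2⟩ := hsq c
        rw [hc] at h1 h2
        rw [h1, h2]
        exact rayleigh_bound M hM c
      exact add_le_add hb1 (ih ht)
  -- the minimizing element
  obtain ⟨c₀, hc₀sum, hc₀val⟩ := exists_min_eigvec M hM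
  set p₀ : MvPolynomial (Fin n) ℝ := ∑ α, c₀ α • P α with hp₀
  have hσmem : lam ∈ {v : ℝ | ∃ σ : MvPolynomial (Fin n) ℝ, IsSumSq σ ∧
      σ.totalDegree ≤ 2 * r ∧ (∫ x in X, eval x σ ∂μ) = 1 ∧
      v = ∫ x in X, eval x f * eval x σ ∂μ} := by
    refine ⟨p₀ * p₀, ?_, ?_, ?_, ?_⟩
    · simpa using IsSumSq.sq_add p₀ IsSumSq.zero
    · refine (totalDegree_mul _ _).trans ?_
      have := hdegcomb c₀
      rw [← hp₀] at this
      omega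
    · rw [show (∫ x in X, eval x (p₀ * p₀) ∂μ)
          = ∫ x in X, eval x p₀ * eval x p₀ ∂μ by
        congr 1; funext x; rw [map_mul]]
      rw [hp₀, (hsq c₀).1, hc₀sum]
    · rw [show (∫ x in X, eval x f * eval x (p₀ * p₀) ∂μ)
          = ∫ x in X, eval x f * (eval x p₀ * eval x p₀) ∂μ by
        congr 1; funext x; rw [map_mul]]
      rw [hp₀, (hsq c₀).2, hc₀val]
  have hlb : ∀ v ∈ {v : ℝ | ∃ σ : MvPolynomial (Fin n) ℝ, IsSumSq σ ∧
      σ.totalDegree ≤ 2 * r ∧ (∫ x in X, eval x σ ∂μ) = 1 ∧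
      v = ∫ x in X, eval x f * eval x σ ∂μ}, lam ≤ v := by
    rintro v ⟨σ, hσ, hσdeg, hσint, rfl⟩
    obtain ⟨L, rfl⟩ := isSumSq_list hσ
    have hdegs : ∀ p ∈ L, p.totalDegree ≤ r := by
      intro p hp
      have := sumSq_deg L p hp
      omega
    have := hLB L hdegs
    rw [hσint, mul_one] at this
    exact this
  exact le_antisymm (csInf_le ⟨lam, fun v hv => hlb v hv⟩ hσmem) (le_csInf ⟨lam, hσmem⟩ hlb)
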